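/- Khintchine's inequality for Lorentz spaces: let 0 < p < ∞ and 0 < q ≤ ∞. There exists a constant C_{p,q} such that for all N ∈ ℕ and all a = (a_1, ..., a_N) ∈ ℝ^N, C_{p,q}^{−1} ‖∑_{i=1}^N a_i R_i‖_{L^{p,q}(0,1)} ≤ (∑_{i=1}^N a_i²)^{1/2} ≤ C_{p,q} ‖∑_{i=1}^N a_i R_i‖_{L^{p,q}(0,1)}. -/

import Mathlib

open Filter MeasureTheory Set Real
open scoped ENNReal NNReal Topology

/-- Non-increasing rearrangement of a sequence (0-indexed: `rearr u j` is the
`(j+1)`-th largest value of `|u|`). -/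
noncomputable def rearr (u : ℕ → ℝ) (j : ℕ) : ℝ :=
  sInf {t : ℝ | 0 ≤ t ∧ Set.encard {i : ℕ | t < |u i|} ≤ (j : ℕ∞)}

/-- Lorentz sequence quasi-norm `‖u‖_{p,q}` for `q < ∞`. -/
noncomputable def lorentzNorm (p q : ℝ) (u : ℕ → ℝ) : ℝ≥0∞ :=
  (∑' j : ℕ, ENNReal.ofReal (((j : ℝ) + 1) ^ (q / p - 1) * rearr u j ^ q)) ^ (1 / q)

/-- Lorentz sequence quasi-norm `‖u‖_{p,∞}`. -/
noncomputable def lorentzNormInf (p : ℝ) (u : ℕ → ℝ) : ℝ≥0∞ :=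
  ⨆ j : ℕ, ENNReal.ofReal (((j : ℝ) + 1) ^ (1 / p) * rearr u j)

/-- Non-increasing rearrangement of a function on `(0,1)`. -/
noncomputable def frearr (f : ℝ → ℝ) (t : ℝ) : ℝ :=
  sInf {l : ℝ | 0 ≤ l ∧
    MeasureTheory.volume {x ∈ Set.Ioo (0 : ℝ) 1 | l < |f x|} ≤ ENNReal.ofReal t}

/-- Lorentz function quasi-norm `‖f‖_{L^{p,q}(0,1)}` for `q < ∞`. -/
noncomputable def lorentzFNorm (p q : ℝ) (f : ℝ → ℝ) : ℝ≥0∞ :=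
  (∫⁻ t in Set.Ioo (0 : ℝ) 1, ENNReal.ofReal (t ^ (q / p - 1) * frearr f t ^ q)) ^ (1 / q)

/-- Lorentz function quasi-norm `‖f‖_{L^{p,∞}(0,1)}`. -/
noncomputable def lorentzFNormInf (p : ℝ) (f : ℝ → ℝ) : ℝ≥0∞ :=
  ⨆ t : Set.Ioo (0 : ℝ) 1, ENNReal.ofReal ((t : ℝ) ^ (1 / p) * frearr f (t : ℝ))

/-- The step function on `(0,1)` associated with `a ∈ ℝ^{2^n}` (0-indexed),
constant equal to `a i` on `(i/2^n, (i+1)/2^n)`. -/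
noncomputable def stepFun (n : ℕ) (a : ℕ → ℝ) : ℝ → ℝ :=
  fun t => ∑ i ∈ Finset.range (2 ^ n),
    a i * Set.indicator (Set.Ioo ((i : ℝ) / 2 ^ n) (((i : ℝ) + 1) / 2 ^ n)) 1 t

/-- Lorentz function quasi-norm with extended second index. -/
noncomputable def lorentzFNormE (p : ℝ) (q : ℝ≥0∞) (f : ℝ → ℝ) : ℝ≥0∞ :=
  if q = ⊤ then lorentzFNormInf p f else lorentzFNorm p q.toReal f

/-- The Rademacher functions `R_n(t) = sign (sin (2^n π t))`. -/
noncomputable def radem (n : ℕ) (t : ℝ) : ℝ :=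
  Real.sign (Real.sin (2 ^ n * Real.pi * t))


open Finset

noncomputable def eps (k i : ℕ) : ℝ := if (k / 2^i) % 2 = 1 then (-1:ℝ) else 1

noncomputable def Tsum (a : ℕ → ℝ) (n k : ℕ) : ℝ := ∑ i ∈ Finset.range n, a i * eps k i

lemma eps_abs (k i : ℕ) : |eps k i| = 1 := by
  unfold eps; split <;> simp

lemma eps_add_pow (j n i : ℕ) (hi : i < n) : eps (j + 2^n) i = eps j i := by
  unfold eps
  have h2 : 2^n = 2^(n-i) * 2^i := by rw [← pow_add]; congr 1; omega
  rw [h2, Nat.add_mul_div_right _ _ (by positivity)]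
  have : (j / 2 ^ i + 2 ^ (n - i)) % 2 = (j / 2^i) % 2 := by
    have : 2^(n-i) = 2 * 2^(n-i-1) := by rw [← pow_succ']; congr 1; omega
    omega
  rw [this]

lemma eps_self (j n : ℕ) (hj : j < 2^n) : eps j n = 1 := by
  unfold eps
  rw [Nat.div_eq_of_lt hj]; norm_num

lemma eps_self' (j n : ℕ) (hj : j < 2^n) : eps (j + 2^n) n = -1 := by
  unfold eps
  have : (j + 2^n) / 2^n = 1 := by
    rw [Nat.add_div_right _ (by positivity), Nat.div_eq_of_lt hj]
  rw [this]; norm_num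

lemma Tsum_succ_lo (a : ℕ → ℝ) (n j : ℕ) (hj : j < 2^n) :
    Tsum a (n+1) j = Tsum a n j + a n := by
  unfold Tsum
  rw [Finset.sum_range_succ, eps_self j n hj, mul_one]

lemma Tsum_succ_hi (a : ℕ → ℝ) (n j : ℕ) (hj : j < 2^n) :
    Tsum a (n+1) (j + 2^n) = Tsum a n j - a n := by
  unfold Tsum
  rw [Finset.sum_range_succ, eps_self' j n hj]
  rw [Finset.sum_congr rfl (fun i hi => by rw [eps_add_pow j n i (Finset.mem_range.mp hi)])]
  ring

lemma sum_range_two_pow_succ (g : ℕ → ℝ) (n : ℕ) :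
    ∑ k ∈ range (2^(n+1)), g k = ∑ j ∈ range (2^n), (g j + g (j + 2^n)) := by
  have : 2^(n+1) = 2^n + 2^n := by ring
  rw [this, Finset.sum_range_add, Finset.sum_add_distrib]
  congr 1
  exact Finset.sum_congr rfl (fun j _ => by rw [add_comm j (2^n)])

lemma moment2 (a : ℕ → ℝ) (n : ℕ) :
    ∑ k ∈ range (2^n), (Tsum a n k)^2 = 2^n * ∑ i ∈ range n, (a i)^2 := by
  induction n with
  | zero => simp [Tsum]
  | succ n ih =>
    rw [sum_range_two_pow_succ]
    have : ∀ j ∈ range (2^n), (Tsum a (n+1) j)^2 + (Tsum a (n+1) (j + 2^n))^2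
        = 2 * (Tsum a n j)^2 + 2 * (a n)^2 := by
      intro j hj
      rw [Tsum_succ_lo a n j (Finset.mem_range.mp hj), Tsum_succ_hi a n j (Finset.mem_range.mp hj)]
      ring
    rw [Finset.sum_congr rfl this, Finset.sum_add_distrib, ← Finset.mul_sum, ih,
      Finset.sum_const, Finset.card_range, Finset.sum_range_succ]
    ring

open Finset

lemma even_binom (X A : ℝ) (m : ℕ) :
    (X+A)^(2*m) + (X-A)^(2*m)
      = ∑ i ∈ range (m+1), 2 * (Nat.choose (2*m) (2*i) : ℝ) * X^(2*i) * A^(2*(m-i)) := by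
  have h1 := add_pow X A (2*m)
  have h2 := add_pow X (-A) (2*m)
  rw [sub_eq_add_neg, h2, h1, ← Finset.sum_add_distrib]
  have hcong : ∀ k ∈ range (2*m+1),
      X ^ k * A ^ (2*m - k) * ((2*m).choose k : ℝ) + X ^ k * (-A) ^ (2*m - k) * ((2*m).choose k : ℝ)
      = X ^ k * A ^ (2*m - k) * ((2*m).choose k : ℝ) * (1 + (-1:ℝ)^(2*m - k)) := by
    intro k _
    rw [neg_pow]
    ring
  rw [Finset.sum_congr rfl hcong]
  set h : ℕ → ℝ := fun k => X ^ k * A ^ (2*m - k) * ((2*m).choose k : ℝ) * (1 + (-1:ℝ)^(2*m - k)) with hh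
  have hsub : Finset.image (fun i => 2*i) (range (m+1)) ⊆ range (2*m+1) := by
    intro k hk
    simp only [Finset.mem_image, Finset.mem_range] at hk ⊢
    obtain ⟨i, hi, rfl⟩ := hk
    omega
  have hzero : ∀ k ∈ range (2*m+1), k ∉ Finset.image (fun i => 2*i) (range (m+1)) → h k = 0 := by
    intro k hk hnk
    simp only [Finset.mem_image, Finset.mem_range] at hk hnk
    have hodd : Odd (2*m - k) := by
      rcases Nat.even_or_odd k with he | ho
      · exact absurd (by obtain ⟨r, hr⟩ := he; exact ⟨r, by omega, by omega⟩) hnk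
      · obtain ⟨r, hr⟩ := ho; exact ⟨m - r - 1, by omega⟩
    simp [hh, hodd.neg_one_pow]
  rw [← Finset.sum_subset hsub hzero, Finset.sum_image (by intros x _ y _ h; simp only at h; omega)]
  refine Finset.sum_congr rfl (fun i hi => ?_)
  simp only [Finset.mem_range] at hi
  have : 2*m - 2*i = 2*(m-i) := by omega
  rw [hh]
  simp only [this]
  rw [(by exact ⟨m-i, by ring⟩ : Even (2*(m-i))).neg_one_pow]
  ring

lemma two_pow_fact_le (j : ℕ) : 2^j * j.factorial ≤ (2*j).factorial := by
  induction j with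
  | zero => simp
  | succ j ih =>
    have : 2*(j+1) = (2*j) + 1 + 1 := by ring
    rw [this, Nat.factorial_succ, Nat.factorial_succ, Nat.factorial_succ, pow_succ]
    calc 2^j * 2 * ((j+1) * j.factorial) = (2*(j+1)) * (2^j * j.factorial) := by ring
    _ ≤ (2*(j+1)) * (2*j).factorial := Nat.mul_le_mul_left _ ih
    _ ≤ (2*j+1+1) * ((2*j+1) * (2*j).factorial) :=
        Nat.mul_le_mul (by omega) (Nat.le_mul_of_pos_left _ (by omega))

noncomputable def kc (m : ℕ) : ℝ := (Nat.factorial (2*m) : ℝ) / (2^m * Nat.factorial m)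

lemma kc_pos (m : ℕ) : 0 < kc m := by
  apply div_pos (by positivity)
  positivity

lemma coeff_le (m i : ℕ) (hi : i ≤ m) :
    (Nat.choose (2*m) (2*i) : ℝ) * kc i ≤ kc m * (Nat.choose m i : ℝ) := by
  unfold kc
  rw [div_mul_eq_mul_div, mul_div_assoc', div_le_div_iff₀ (by positivity) (by positivity)]
  have hnat : (2*m).choose (2*i) * (2*i).factorial * (2^m * m.factorial)
      ≤ (2*m).factorial * (m.choose i) * (2^i * i.factorial) := by
    have key : 2^m * m.factorial ≤ (m.choose i) * (2^i * i.factorial) * (2*(m-i)).factorial := by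
      have hm : m.choose i * i.factorial * (m-i).factorial = m.factorial :=
        Nat.choose_mul_factorial_mul_factorial hi
      calc 2^m * m.factorial = 2^m * (m.choose i * i.factorial * (m-i).factorial) := by rw [hm]
      _ = 2^(i + (m-i)) * (m.choose i * i.factorial * (m-i).factorial) := by
          rw [Nat.add_sub_cancel' hi]
      _ = (m.choose i) * (2^i * i.factorial) * (2^(m-i) * (m-i).factorial) := by
          rw [pow_add]; ring
      _ ≤ (m.choose i) * (2^i * i.factorial) * (2*(m-i)).factorial :=
          Nat.mul_le_mul_left _ (two_pow_fact_le (m-i))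
    calc (2*m).choose (2*i) * (2*i).factorial * (2^m * m.factorial)
        ≤ (2*m).choose (2*i) * (2*i).factorial * ((m.choose i) * (2^i * i.factorial) * (2*(m-i)).factorial) := Nat.mul_le_mul_left _ key
    _ = ((2*m).choose (2*i) * (2*i).factorial * (2*(m-i)).factorial) * ((m.choose i) * (2^i * i.factorial)) := by ring
    _ = (2*m).factorial * ((m.choose i) * (2^i * i.factorial)) := by
        rw [show 2*(m-i) = 2*m - 2*i by omega, Nat.choose_mul_factorial_mul_factorial (by omega)]
    _ = (2*m).factorial * (m.choose i) * (2^i * i.factorial) := by ring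
  calc (Nat.choose (2*m) (2*i) : ℝ) * (2*i).factorial * (2^m * m.factorial)
      = ((((2*m).choose (2*i) * (2*i).factorial * (2^m * m.factorial)) : ℕ) : ℝ) := by push_cast; ring
  _ ≤ ((((2*m).factorial * (m.choose i) * (2^i * i.factorial)) : ℕ) : ℝ) := by exact_mod_cast Nat.cast_le.mpr hnat
  _ = ((2*m).factorial : ℝ) * (m.choose i) * (2^i * i.factorial) := by push_cast; ring

lemma moment_even (a : ℕ → ℝ) : ∀ n m, ∑ k ∈ range (2^n), (Tsum a n k)^(2*m)
    ≤ 2^n * kc m * (∑ i ∈ range n, (a i)^2)^m := by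
  intro n
  induction n with
  | zero =>
    intro m
    simp only [pow_zero, Finset.range_one, Finset.sum_singleton, Finset.range_zero,
      Finset.sum_empty, one_mul]
    have : Tsum a 0 0 = 0 := by simp [Tsum]
    rw [this]
    rcases Nat.eq_zero_or_pos m with rfl | hm
    · simp [kc]
    · rw [zero_pow (by omega), zero_pow (by omega)]
      simp
  | succ n ih =>
    intro m
    have hsplit : ∑ k ∈ range (2^(n+1)), (Tsum a (n+1) k)^(2*m)
        = ∑ j ∈ range (2^n), ((Tsum a (n+1) j)^(2*m) + (Tsum a (n+1) (j + 2^n))^(2*m)) :=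
      sum_range_two_pow_succ _ n
    rw [hsplit]
    set A := a n with hA
    set S := ∑ i ∈ range n, (a i)^2 with hS
    have hS0 : 0 ≤ S := Finset.sum_nonneg (fun i _ => sq_nonneg _)
    have hstep : ∀ j ∈ range (2^n),
        (Tsum a (n+1) j)^(2*m) + (Tsum a (n+1) (j + 2^n))^(2*m)
        = ∑ i ∈ range (m+1), 2 * (Nat.choose (2*m) (2*i) : ℝ) * (Tsum a n j)^(2*i) * A^(2*(m-i)) := by
      intro j hj
      rw [Tsum_succ_lo a n j (Finset.mem_range.mp hj), Tsum_succ_hi a n j (Finset.mem_range.mp hj)]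
      exact even_binom _ _ m
    rw [Finset.sum_congr rfl hstep, Finset.sum_comm]
    have hbound : ∀ i ∈ range (m+1),
        ∑ j ∈ range (2^n), 2 * (Nat.choose (2*m) (2*i) : ℝ) * (Tsum a n j)^(2*i) * A^(2*(m-i))
        ≤ 2^(n+1) * kc m * ((Nat.choose m i : ℝ) * S^i * (A^2)^(m-i)) := by
      intro i hi
      have hi' : i ≤ m := by simpa using Nat.lt_succ_iff.mp (Finset.mem_range.mp hi)
      have h1 : ∑ j ∈ range (2^n), 2 * (Nat.choose (2*m) (2*i) : ℝ) * (Tsum a n j)^(2*i) * A^(2*(m-i))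
          = 2 * (Nat.choose (2*m) (2*i) : ℝ) * A^(2*(m-i)) * ∑ j ∈ range (2^n), (Tsum a n j)^(2*i) := by
        rw [Finset.mul_sum]; exact Finset.sum_congr rfl (fun j _ => by ring)
      rw [h1]
      have hAp : (0:ℝ) ≤ A^(2*(m-i)) := by rw [pow_mul]; positivity
      calc 2 * (Nat.choose (2*m) (2*i) : ℝ) * A^(2*(m-i)) * ∑ j ∈ range (2^n), (Tsum a n j)^(2*i)
          ≤ 2 * (Nat.choose (2*m) (2*i) : ℝ) * A^(2*(m-i)) * (2^n * kc i * S^i) := by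
            apply mul_le_mul_of_nonneg_left (ih i)
            positivity
      _ = 2^(n+1) * ((Nat.choose (2*m) (2*i) : ℝ) * kc i) * (S^i * A^(2*(m-i))) := by ring
      _ ≤ 2^(n+1) * (kc m * (Nat.choose m i : ℝ)) * (S^i * A^(2*(m-i))) := by
            apply mul_le_mul_of_nonneg_right (mul_le_mul_of_nonneg_left (coeff_le m i hi') (by positivity))
            positivity
      _ = 2^(n+1) * kc m * ((Nat.choose m i : ℝ) * S^i * (A^2)^(m-i)) := by
            rw [pow_mul]; ring
    calc ∑ i ∈ range (m+1), ∑ j ∈ range (2^n), 2 * (Nat.choose (2*m) (2*i) : ℝ) * (Tsum a n j)^(2*i) * A^(2*(m-i))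
        ≤ ∑ i ∈ range (m+1), 2^(n+1) * kc m * ((Nat.choose m i : ℝ) * S^i * (A^2)^(m-i)) :=
          Finset.sum_le_sum hbound
    _ = 2^(n+1) * kc m * ∑ i ∈ range (m+1), S^i * (A^2)^(m-i) * (Nat.choose m i : ℝ) := by
        rw [Finset.mul_sum]; exact Finset.sum_congr rfl (fun i _ => by ring)
    _ = 2^(n+1) * kc m * (S + A^2)^m := by rw [← add_pow]
    _ = 2^(n+1) * kc m * (∑ i ∈ range (n+1), (a i)^2)^m := by
        rw [Finset.sum_range_succ, ← hS, ← hA]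

lemma sign_sin_pi (x : ℝ) (m : ℕ) (hx : (m:ℝ) < x) (hx' : x < m + 1) :
    Real.sign (Real.sin (Real.pi * x)) = if m % 2 = 1 then (-1:ℝ) else 1 := by
  have h1 : Real.sin (Real.pi * x) = (-1)^(m:ℤ) * Real.sin (Real.pi * (x - m)) := by
    rw [← Real.sin_add_int_mul_pi (Real.pi * (x - m)) (m:ℤ)]
    push_cast
    ring_nf
  have h2 : 0 < Real.sin (Real.pi * (x - m)) := by
    apply Real.sin_pos_of_pos_of_lt_pi
    · have : 0 < x - m := by linarith
      positivity
    · nlinarith [Real.pi_pos]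
  rw [h1]
  rcases Nat.even_or_odd m with he | ho
  · have hpow : ((-1:ℝ))^(m:ℤ) = 1 := by
      rw [zpow_natCast]; exact he.neg_one_pow
    rw [hpow, one_mul, Real.sign_of_pos h2, Nat.even_iff.mp he]
    norm_num
  · have hpow : ((-1:ℝ))^(m:ℤ) = -1 := by
      rw [zpow_natCast]; exact ho.neg_one_pow
    rw [hpow, neg_one_mul, Real.sign_of_neg (by linarith), Nat.odd_iff.mp ho]
    norm_num

lemma radem_eq_eps (i N k : ℕ) (hiN : i ≤ N) (t : ℝ)
    (ht : t ∈ Set.Ioo ((k:ℝ)/2^N) (((k:ℝ)+1)/2^N)) :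
    radem i t = eps k (N - i) := by
  set j := N - i with hj
  set m := k / 2 ^ j with hm
  have hmk : m * 2^j ≤ k := Nat.div_mul_le_self k (2^j)
  have hk1 : k + 1 ≤ m * 2^j + 2^j := by
    have h : 2^j * (k / 2^j) + k % 2^j = k := Nat.div_add_mod k (2^j)
    rw [← hm] at h
    have hrlt : k % 2^j < 2^j := Nat.mod_lt _ (by positivity)
    nlinarith
  have hNij : (2:ℝ)^N = 2^i * 2^j := by
    rw [← pow_add]; congr 1; omega
  have h2j : (0:ℝ) < 2^j := by positivity
  have h2i : (0:ℝ) < 2^i := by positivity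
  obtain ⟨ht1, ht2⟩ := ht
  set x := (2:ℝ)^i * t with hx
  have hq : ∀ y : ℝ, y / 2^N * 2^i = y / 2^j := by
    intro y; rw [hNij]; field_simp
  have hx1 : (m:ℝ) < x := by
    have h1 : (m:ℝ) ≤ (k:ℝ) / 2^j := by
      rw [le_div_iff₀ h2j]
      exact_mod_cast hmk
    have h2 : (k:ℝ) / 2^j < x := by
      rw [← hq, hx]
      nlinarith
    linarith
  have hx2 : x < (m:ℝ) + 1 := by
    have h1 : ((k:ℝ)+1) / 2^j ≤ (m:ℝ) + 1 := by
      rw [div_le_iff₀ h2j]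
      have : ((k:ℝ)+1) ≤ ((m:ℝ)*2^j + 2^j) := by exact_mod_cast hk1
      linarith [this]
    have h2 : x < ((k:ℝ)+1) / 2^j := by
      rw [← hq, hx]
      nlinarith
    linarith
  have hre : radem i t = Real.sign (Real.sin (Real.pi * x)) := by
    unfold radem
    congr 1
    rw [hx]; ring
  rw [hre, sign_sin_pi x m hx1 hx2]
  rfl


noncomputable def bdisc (N : ℕ) (a : ℕ → ℝ) (k : ℕ) : ℝ :=
  ∑ i ∈ Finset.Icc 1 N, a i * eps k (N - i)

lemma f_eq_bdisc (N : ℕ) (a : ℕ → ℝ) (k : ℕ) (t : ℝ)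
    (ht : t ∈ Set.Ioo ((k:ℝ)/2^N) (((k:ℝ)+1)/2^N)) :
    ∑ i ∈ Finset.Icc 1 N, a i * radem i t = bdisc N a k := by
  refine Finset.sum_congr rfl (fun i hi => ?_)
  rw [radem_eq_eps i N k (by simp at hi; omega) t ht]

lemma bdisc_eq_Tsum (N : ℕ) (a : ℕ → ℝ) (k : ℕ) :
    bdisc N a k = Tsum (fun j => a (N - j)) N k := by
  unfold bdisc Tsum
  refine Finset.sum_nbij' (fun i => N - i) (fun j => N - j) ?_ ?_ ?_ ?_ ?_
  · intro i hi; simp at hi ⊢; omega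
  · intro j hj; simp at hj ⊢; omega
  · intro i hi; simp at hi ⊢; omega
  · intro j hj; simp at hj ⊢; omega
  · intro i hi
    simp only [Finset.mem_Icc] at hi
    simp only []
    have h2 : N - (N - i) = i := by omega
    rw [h2]

lemma sumsq_eq (N : ℕ) (a : ℕ → ℝ) :
    ∑ i ∈ Finset.Icc 1 N, (a i)^2 = ∑ j ∈ Finset.range N, (a (N - j))^2 := by
  refine Finset.sum_nbij' (fun i => N - i) (fun j => N - j) ?_ ?_ ?_ ?_ ?_
  · intro i hi; simp at hi ⊢; omega
  · intro j hj; simp at hj ⊢; omega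
  · intro i hi; simp at hi ⊢; omega
  · intro j hj; simp at hj ⊢; omega
  · intro i hi
    simp only [Finset.mem_Icc] at hi
    have h2 : N - (N - i) = i := by omega
    rw [h2]

open MeasureTheory in
lemma rdist_eq (N : ℕ) (a : ℕ → ℝ) (l : ℝ) :
    volume {x ∈ Set.Ioo (0:ℝ) 1 | l < |∑ i ∈ Finset.Icc 1 N, a i * radem i x|}
      = ENNReal.ofReal (((((Finset.range (2^N)).filter
          (fun k => l < |bdisc N a k|)).card : ℝ)) / 2^N) := by
  set S := (Finset.range (2^N)).filter (fun k => l < |bdisc N a k|) with hS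
  set I : ℕ → Set ℝ := fun k => Set.Ioo ((k:ℝ)/2^N) (((k:ℝ)+1)/2^N) with hI
  set E := {x ∈ Set.Ioo (0:ℝ) 1 | l < |∑ i ∈ Finset.Icc 1 N, a i * radem i x|} with hE
  set D := ⋃ j ∈ Finset.range (2^N+1), {((j:ℕ):ℝ)/2^N} with hD
  have h2N : (0:ℝ) < 2^N := by positivity
  -- U ⊆ E
  have hUE : (⋃ k ∈ S, I k) ⊆ E := by
    intro x hx
    simp only [Set.mem_iUnion] at hx
    obtain ⟨k, hk, hxk⟩ := hx
    rw [hS, Finset.mem_filter, Finset.mem_range] at hk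
    obtain ⟨hk2, hkl⟩ := hk
    obtain ⟨hx1, hx2⟩ := hxk
    constructor
    · constructor
      · calc (0:ℝ) ≤ (k:ℝ)/2^N := by positivity
        _ < x := hx1
      · calc x < ((k:ℝ)+1)/2^N := hx2
        _ ≤ 1 := by
            rw [div_le_one h2N]
            have : (k:ℝ) + 1 ≤ ((2^N : ℕ) : ℝ) := by exact_mod_cast hk2
            push_cast at this ⊢
            linarith
    · rw [f_eq_bdisc N a k x ⟨hx1, hx2⟩]
      exact hkl
  -- E ⊆ U ∪ D
  have hED : E ⊆ (⋃ k ∈ S, I k) ∪ D := by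
    intro x hx
    obtain ⟨⟨hx0, hx1⟩, hxl⟩ := hx
    by_cases hxD : x ∈ D
    · exact Or.inr hxD
    left
    set k := ⌊(2:ℝ)^N * x⌋₊ with hk
    have hfl : (k:ℝ) ≤ 2^N * x := Nat.floor_le (by positivity)
    have hfl2 : 2^N * x < (k:ℝ) + 1 := Nat.lt_floor_add_one _
    have hklt : k < 2^N := by
      have : (2:ℝ)^N * x < ((2^N : ℕ) : ℝ) := by push_cast; nlinarith
      have h2 := (Nat.floor_lt (by positivity : (0:ℝ) ≤ 2^N * x)).mpr this
      exact h2
    have hne : (k:ℝ) ≠ 2^N * x := by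
      intro heq
      apply hxD
      rw [hD]
      simp only [Set.mem_iUnion, Set.mem_singleton_iff, Finset.mem_range]
      refine ⟨k, by omega, ?_⟩
      rw [eq_div_iff (ne_of_gt h2N)]
      nlinarith [heq]
    have hxIk : x ∈ I k := by
      constructor
      · rw [div_lt_iff₀ h2N]
        rcases lt_or_eq_of_le hfl with h | h
        · linarith [mul_comm x ((2:ℝ)^N)]
        · exact absurd h hne
      · rw [lt_div_iff₀ h2N]
        linarith [mul_comm x ((2:ℝ)^N)]
    simp only [Set.mem_iUnion]
    refine ⟨k, ?_, hxIk⟩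
    rw [hS, Finset.mem_filter, Finset.mem_range]
    refine ⟨hklt, ?_⟩
    rw [← f_eq_bdisc N a k x hxIk]
    exact hxl
  -- volume D = 0
  have hDvol : volume D = 0 := by
    rw [hD]
    refine le_antisymm ?_ zero_le
    calc volume (⋃ j ∈ Finset.range (2^N+1), {((j:ℕ):ℝ)/2^N})
        ≤ ∑ j ∈ Finset.range (2^N+1), volume {((j:ℕ):ℝ)/2^N} := measure_biUnion_finset_le _ _
    _ = 0 := by simp
  -- volume U
  have hUvol : volume (⋃ k ∈ S, I k) = ENNReal.ofReal ((S.card : ℝ) / 2^N) := by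
    rw [measure_biUnion_finset ?_ (fun k _ => measurableSet_Ioo)]
    · have : ∀ k ∈ S, volume (I k) = ENNReal.ofReal (1/2^N) := by
        intro k _
        rw [hI]
        simp only [Real.volume_Ioo]
        congr 1
        ring
      rw [Finset.sum_congr rfl this, Finset.sum_const, nsmul_eq_mul]
      rw [← ENNReal.ofReal_natCast, ← ENNReal.ofReal_mul (by positivity)]
      congr 1
      ring
    · intro k hk k' hk' hne
      have : ∀ m m' : ℕ, m < m' → Disjoint (I m) (I m') := by
        intro m m' hmm'
        rw [Set.disjoint_left]
        intro x hx hx'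
        have h1 : x < ((m:ℝ)+1)/2^N := hx.2
        have h2 : ((m':ℝ))/2^N < x := hx'.1
        have : (m:ℝ) + 1 ≤ (m':ℝ) := by exact_mod_cast hmm'
        have h3 : ((m:ℝ)+1)/2^N ≤ ((m':ℝ))/2^N :=
          div_le_div_of_nonneg_right this h2N.le
        linarith
      rcases Nat.lt_or_ge k k' with h | h
      · exact this k k' h
      · exact (this k' k (by omega)).symm
  -- conclude
  refine le_antisymm ?_ ?_
  · calc volume E ≤ volume ((⋃ k ∈ S, I k) ∪ D) := measure_mono hED
    _ ≤ volume (⋃ k ∈ S, I k) + volume D := measure_union_le _ _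
    _ = ENNReal.ofReal ((S.card : ℝ) / 2^N) := by rw [hDvol, hUvol, add_zero]
  · rw [← hUvol]
    exact measure_mono hUE


open MeasureTheory in
lemma lint_rpow (α c : ℝ) (hα : 0 < α) (hc : 0 < c) (hc1 : c ≤ 1) :
    ∫⁻ t in Set.Ioo (0:ℝ) c, ENNReal.ofReal (t^(α-1)) = ENNReal.ofReal (c^α/α) := by
  have hint : IntervalIntegrable (fun t : ℝ => t^(α-1)) volume 0 c :=
    intervalIntegral.intervalIntegrable_rpow' (by linarith)
  have hIoc : IntegrableOn (fun t : ℝ => t^(α-1)) (Set.Ioc 0 c) volume := hint.1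
  have hIoo : IntegrableOn (fun t : ℝ => t^(α-1)) (Set.Ioo 0 c) volume :=
    hIoc.mono_set Set.Ioo_subset_Ioc_self
  have hnn : 0 ≤ᵐ[volume.restrict (Set.Ioo 0 c)] (fun t : ℝ => t^(α-1)) := by
    filter_upwards [ae_restrict_mem measurableSet_Ioo] with t ht
    exact Real.rpow_nonneg ht.1.le _
  rw [← MeasureTheory.ofReal_integral_eq_lintegral_ofReal hIoo hnn]
  congr 1
  rw [← MeasureTheory.integral_Ioc_eq_integral_Ioo, ← intervalIntegral.integral_of_le hc.le]
  rw [integral_rpow (Or.inl (by linarith))]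
  rw [Real.zero_rpow (by linarith), sub_add_cancel]
  ring


noncomputable def ffun (N : ℕ) (a : ℕ → ℝ) : ℝ → ℝ := fun t => ∑ i ∈ Finset.Icc 1 N, a i * radem i t

lemma frearr_nonneg (f : ℝ → ℝ) (t : ℝ) : 0 ≤ frearr f t :=
  Real.sInf_nonneg (fun _ hl => hl.1)

lemma kc_two : kc 2 = 3 := by
  norm_num [kc, Nat.factorial]

lemma moment_bdisc (N : ℕ) (a : ℕ → ℝ) (m : ℕ) :
    ∑ k ∈ Finset.range (2^N), (bdisc N a k)^(2*m)
      ≤ 2^N * kc m * (∑ i ∈ Finset.Icc 1 N, a i ^ 2)^m := by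
  rw [sumsq_eq]
  calc ∑ k ∈ Finset.range (2^N), (bdisc N a k)^(2*m)
      = ∑ k ∈ Finset.range (2^N), (Tsum (fun j => a (N-j)) N k)^(2*m) := by
        exact Finset.sum_congr rfl (fun k _ => by rw [bdisc_eq_Tsum])
  _ ≤ 2^N * kc m * (∑ j ∈ Finset.range N, (a (N-j)) ^ 2)^m := moment_even _ N m

lemma moment2_bdisc (N : ℕ) (a : ℕ → ℝ) :
    ∑ k ∈ Finset.range (2^N), (bdisc N a k)^2 = 2^N * ∑ i ∈ Finset.Icc 1 N, a i ^ 2 := by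
  rw [sumsq_eq]
  calc ∑ k ∈ Finset.range (2^N), (bdisc N a k)^2
      = ∑ k ∈ Finset.range (2^N), (Tsum (fun j => a (N-j)) N k)^2 := by
        exact Finset.sum_congr rfl (fun k _ => by rw [bdisc_eq_Tsum])
  _ = 2^N * ∑ j ∈ Finset.range N, (a (N-j)) ^ 2 := moment2 _ N

open MeasureTheory in
lemma frearr_upper (N : ℕ) (a : ℕ → ℝ) (m : ℕ) (hm : 1 ≤ m) (t : ℝ) (ht : 0 < t)
    (hS : 0 < ∑ i ∈ Finset.Icc 1 N, a i ^ 2) :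
    frearr (ffun N a) t
      ≤ (kc m * (∑ i ∈ Finset.Icc 1 N, a i ^ 2)^m / t)^(1/(2*m):ℝ) := by
  set S' := ∑ i ∈ Finset.Icc 1 N, a i ^ 2 with hS'
  have hkc := kc_pos m
  have hbase : 0 < kc m * S'^m / t := by positivity
  set L := (kc m * S'^m / t)^(1/(2*m):ℝ) with hL
  have hLpos : 0 < L := Real.rpow_pos_of_pos hbase _
  have hLpow : L^(2*m) = kc m * S'^m / t := by
    rw [hL, ← Real.rpow_natCast ((kc m * S'^m / t)^(1/(2*m):ℝ)) (2*m), ← Real.rpow_mul hbase.le]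
    push_cast
    rw [one_div_mul_cancel (by positivity : (2*(m:ℝ)) ≠ 0), Real.rpow_one]
  apply csInf_le ⟨0, fun l hl => hl.1⟩
  refine ⟨hLpos.le, ?_⟩
  have hde : {x ∈ Set.Ioo (0:ℝ) 1 | L < |ffun N a x|}
      = {x ∈ Set.Ioo (0:ℝ) 1 | L < |∑ i ∈ Finset.Icc 1 N, a i * radem i x|} := rfl
  rw [hde, rdist_eq]
  apply ENNReal.ofReal_le_ofReal
  set c := ((Finset.range (2^N)).filter (fun k => L < |bdisc N a k|)).card with hc
  have hcheb : (c:ℝ) * (kc m * S'^m / t) ≤ 2^N * kc m * S'^m := by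
    have h1 : (c:ℝ) * L^(2*m) ≤ ∑ k ∈ (Finset.range (2^N)).filter (fun k => L < |bdisc N a k|),
        (bdisc N a k)^(2*m) := by
      rw [← nsmul_eq_mul, ← Finset.sum_const]
      apply Finset.sum_le_sum
      intro k hk
      rw [Finset.mem_filter] at hk
      calc L^(2*m) ≤ |bdisc N a k|^(2*m) := pow_le_pow_left₀ hLpos.le hk.2.le _
      _ = (bdisc N a k)^(2*m) := by
          rw [← abs_pow]
          apply abs_of_nonneg
          rw [pow_mul]
          positivity
    have h2 : ∑ k ∈ (Finset.range (2^N)).filter (fun k => L < |bdisc N a k|),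
        (bdisc N a k)^(2*m) ≤ ∑ k ∈ Finset.range (2^N), (bdisc N a k)^(2*m) := by
      apply Finset.sum_le_sum_of_subset_of_nonneg (Finset.filter_subset _ _)
      intro k _ _
      rw [pow_mul]
      positivity
    rw [← hLpow]
    calc (c:ℝ) * L^(2*m) ≤ ∑ k ∈ Finset.range (2^N), (bdisc N a k)^(2*m) := le_trans h1 h2
    _ ≤ 2^N * kc m * S'^m := moment_bdisc N a m
  rw [div_le_iff₀ (by positivity : (0:ℝ) < 2^N)]
  have hApos : 0 < kc m * S'^m := by positivity
  have h2' : (c:ℝ) * (kc m * S'^m) ≤ 2^N * kc m * S'^m * t := by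
    have h3 := mul_le_mul_of_nonneg_right hcheb ht.le
    calc (c:ℝ) * (kc m * S'^m) = (c:ℝ) * (kc m * S'^m / t) * t := by field_simp
    _ ≤ 2^N * kc m * S'^m * t := h3
  by_contra hcon
  rw [not_le] at hcon
  have h4 := mul_lt_mul_of_pos_right hcon hApos
  nlinarith

lemma pz_card (N : ℕ) (a : ℕ → ℝ) (hS : 0 < ∑ i ∈ Finset.Icc 1 N, a i ^ 2) :
    (3:ℝ)/16 * 2^N ≤ (((Finset.range (2^N)).filter
      (fun k => Real.sqrt (∑ i ∈ Finset.Icc 1 N, a i ^ 2)/2 < |bdisc N a k|)).card : ℝ) := by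
  set S' := ∑ i ∈ Finset.Icc 1 N, a i ^ 2 with hS'
  set A := (Finset.range (2^N)).filter (fun k => Real.sqrt S'/2 < |bdisc N a k|) with hA
  have h2 : ∑ k ∈ Finset.range (2^N), (bdisc N a k)^2 = 2^N * S' := moment2_bdisc N a
  have h4 : ∑ k ∈ Finset.range (2^N), (bdisc N a k)^(2*2) ≤ 2^N * 3 * S'^2 := by
    calc ∑ k ∈ Finset.range (2^N), (bdisc N a k)^(2*2) ≤ 2^N * kc 2 * S'^2 := moment_bdisc N a 2
    _ = 2^N * 3 * S'^2 := by rw [kc_two]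
  have hsplit := Finset.sum_filter_add_sum_filter_not (Finset.range (2^N))
    (fun k => Real.sqrt S'/2 < |bdisc N a k|) (fun k => (bdisc N a k)^2)
  have hnotA : ∑ k ∈ (Finset.range (2^N)).filter (fun k => ¬(Real.sqrt S'/2 < |bdisc N a k|)),
      (bdisc N a k)^2 ≤ 2^N * (S'/4) := by
    calc ∑ k ∈ (Finset.range (2^N)).filter (fun k => ¬(Real.sqrt S'/2 < |bdisc N a k|)),
        (bdisc N a k)^2
        ≤ ∑ _k ∈ (Finset.range (2^N)).filter (fun k => ¬(Real.sqrt S'/2 < |bdisc N a k|)),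
          (S'/4) := by
          apply Finset.sum_le_sum
          intro k hk
          rw [Finset.mem_filter, not_lt] at hk
          calc (bdisc N a k)^2 = |bdisc N a k|^2 := (sq_abs _).symm
          _ ≤ (Real.sqrt S'/2)^2 := pow_le_pow_left₀ (abs_nonneg _) hk.2 _
          _ = S'/4 := by rw [div_pow, Real.sq_sqrt hS.le]; norm_num
    _ ≤ 2^N * (S'/4) := by
        rw [Finset.sum_const, nsmul_eq_mul]
        apply mul_le_mul_of_nonneg_right _ (by positivity)
        calc ((Finset.filter _ _).card : ℝ) ≤ ((Finset.range (2^N)).card : ℝ) := by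
              exact_mod_cast Finset.card_filter_le _ _
        _ = 2^N := by rw [Finset.card_range]; push_cast; ring
  have hAsum : (3/4) * (2^N * S') ≤ ∑ k ∈ A, (bdisc N a k)^2 := by
    have : ∑ k ∈ A, (bdisc N a k)^2 = 2^N * S' - ∑ k ∈ (Finset.range (2^N)).filter
        (fun k => ¬(Real.sqrt S'/2 < |bdisc N a k|)), (bdisc N a k)^2 := by
      rw [← h2, ← hsplit]; ring
    rw [this]
    nlinarith [hnotA]
  have hCS : (∑ k ∈ A, (bdisc N a k)^2)^2 ≤ (A.card : ℝ) * ∑ k ∈ A, ((bdisc N a k)^2)^2 :=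
    sq_sum_le_card_mul_sum_sq
  have h4' : ∑ k ∈ A, ((bdisc N a k)^2)^2 ≤ 2^N * 3 * S'^2 := by
    calc ∑ k ∈ A, ((bdisc N a k)^2)^2 = ∑ k ∈ A, (bdisc N a k)^(2*2) := by
          exact Finset.sum_congr rfl (fun k _ => by ring)
    _ ≤ ∑ k ∈ Finset.range (2^N), (bdisc N a k)^(2*2) := by
          apply Finset.sum_le_sum_of_subset_of_nonneg (Finset.filter_subset _ _)
          intro k _ _
          rw [pow_mul]
          positivity
    _ ≤ 2^N * 3 * S'^2 := h4
  have hp2 : (0:ℝ) < 2^N := by positivity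
  have hcard0 : (0:ℝ) ≤ (A.card : ℝ) := Nat.cast_nonneg _
  have e0 : (0:ℝ) ≤ 3/4*(2^N*S') := by positivity
  have e1 : (3/4*(2^N*S'))^2 ≤ ((A.card:ℝ)) * (2^N*3*S'^2) := by
    calc (3/4*(2^N*S'))^2 ≤ (∑ k ∈ A, (bdisc N a k)^2)^2 := pow_le_pow_left₀ e0 hAsum 2
    _ ≤ (A.card : ℝ) * ∑ k ∈ A, ((bdisc N a k)^2)^2 := hCS
    _ ≤ (A.card : ℝ) * (2^N*3*S'^2) := mul_le_mul_of_nonneg_left h4' hcard0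
  by_contra hcon
  rw [not_le] at hcon
  have e2 := mul_lt_mul_of_pos_right hcon (mul_pos (mul_pos (by norm_num : (0:ℝ)<3) hp2) (mul_pos hS hS))
  nlinarith [e1, e2, mul_pos hp2 hS, sq_nonneg (2^N*S' : ℝ)]

open MeasureTheory in
lemma frearr_lower (N : ℕ) (a : ℕ → ℝ) (t : ℝ) (ht : 0 < t) (ht2 : t < 3/16) :
    Real.sqrt (∑ i ∈ Finset.Icc 1 N, a i ^ 2) / 2 ≤ frearr (ffun N a) t := by
  set S' := ∑ i ∈ Finset.Icc 1 N, a i ^ 2 with hS'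
  have hS0 : 0 ≤ S' := Finset.sum_nonneg (fun i _ => sq_nonneg _)
  rcases eq_or_lt_of_le hS0 with h0 | hS
  · rw [← h0, Real.sqrt_zero]
    simpa using frearr_nonneg (ffun N a) t
  apply le_csInf
  · refine ⟨∑ k ∈ Finset.range (2^N), |bdisc N a k|, Finset.sum_nonneg (fun k _ => abs_nonneg _), ?_⟩
    have hde : {x ∈ Set.Ioo (0:ℝ) 1 | (∑ k ∈ Finset.range (2^N), |bdisc N a k|) < |ffun N a x|}
        = {x ∈ Set.Ioo (0:ℝ) 1 |
            (∑ k ∈ Finset.range (2^N), |bdisc N a k|) < |∑ i ∈ Finset.Icc 1 N, a i * radem i x|} := rfl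
    rw [hde, rdist_eq]
    have : (Finset.range (2^N)).filter
        (fun k => (∑ k' ∈ Finset.range (2^N), |bdisc N a k'|) < |bdisc N a k|) = ∅ := by
      rw [Finset.filter_eq_empty_iff]
      intro k hk
      rw [not_lt]
      exact Finset.single_le_sum (fun k' _ => abs_nonneg (bdisc N a k')) hk
    rw [this]
    simp
  · rintro l ⟨hl0, hlv⟩
    by_contra hlt
    rw [not_le] at hlt
    have hde : {x ∈ Set.Ioo (0:ℝ) 1 | l < |ffun N a x|}
        = {x ∈ Set.Ioo (0:ℝ) 1 | l < |∑ i ∈ Finset.Icc 1 N, a i * radem i x|} := rfl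
    rw [hde, rdist_eq] at hlv
    rw [ENNReal.ofReal_le_ofReal_iff ht.le] at hlv
    have hsub : (Finset.range (2^N)).filter (fun k => Real.sqrt S'/2 < |bdisc N a k|)
        ⊆ (Finset.range (2^N)).filter (fun k => l < |bdisc N a k|) := by
      apply Finset.monotone_filter_right
      intro k _ hk
      exact lt_trans hlt hk
    have hcard := pz_card N a hS
    have hcard2 : (3:ℝ)/16 * 2^N
        ≤ (((Finset.range (2^N)).filter (fun k => l < |bdisc N a k|)).card : ℝ) := by
      calc (3:ℝ)/16 * 2^N ≤ _ := hcard
      _ ≤ _ := by exact_mod_cast Finset.card_le_card hsub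
    have hp2 : (0:ℝ) < 2^N := by positivity
    rw [div_le_iff₀ hp2] at hlv
    nlinarith



open MeasureTheory in
lemma frearr_of_zero (N : ℕ) (a : ℕ → ℝ) (hS : ∑ i ∈ Finset.Icc 1 N, a i ^ 2 = 0) (t : ℝ) :
    frearr (ffun N a) t = 0 := by
  have ha : ∀ i ∈ Finset.Icc 1 N, a i = 0 := by
    intro i hi
    have := (Finset.sum_eq_zero_iff_of_nonneg (fun i _ => sq_nonneg (a i))).mp hS i hi
    exact pow_eq_zero_iff (by norm_num) |>.mp this
  have hf : ∀ x, ffun N a x = 0 := by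
    intro x
    exact Finset.sum_eq_zero (fun i hi => by rw [ha i hi, zero_mul])
  apply le_antisymm _ (frearr_nonneg _ _)
  apply csInf_le ⟨0, fun l hl => hl.1⟩
  refine ⟨le_refl 0, ?_⟩
  have : {x ∈ Set.Ioo (0:ℝ) 1 | (0:ℝ) < |ffun N a x|} = ∅ := by
    ext x
    simp [hf x]
  rw [this]
  simp

lemma lorentzFNormE_zero (p : ℝ) (q : ℝ≥0∞) (hq : 0 < q) (N : ℕ) (a : ℕ → ℝ)
    (hS : ∑ i ∈ Finset.Icc 1 N, a i ^ 2 = 0) :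
    lorentzFNormE p q (ffun N a) = 0 := by
  unfold lorentzFNormE
  split
  · unfold lorentzFNormInf
    apply le_antisymm _ zero_le
    apply iSup_le
    intro t
    rw [frearr_of_zero N a hS, mul_zero]
    simp
  · next hqt =>
    unfold lorentzFNorm
    have hr : 0 < q.toReal := ENNReal.toReal_pos hq.ne' hqt
    have : ∫⁻ t in Set.Ioo (0:ℝ) 1,
        ENNReal.ofReal (t ^ (q.toReal / p - 1) * frearr (ffun N a) t ^ q.toReal) = 0 := by
      rw [← MeasureTheory.lintegral_zero (μ := MeasureTheory.volume.restrict (Set.Ioo (0:ℝ) 1))]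
      apply MeasureTheory.lintegral_congr
      intro t
      rw [frearr_of_zero N a hS, Real.zero_rpow hr.ne', mul_zero]
      simp
    rw [this, ENNReal.zero_rpow_of_pos (by positivity)]

lemma sqrtpow_eq (S' : ℝ) (hS : 0 ≤ S') (m : ℕ) (hm : 1 ≤ m) :
    (S'^m)^(1/(2*m):ℝ) = Real.sqrt S' := by
  rw [← Real.rpow_natCast S' m, ← Real.rpow_mul hS, Real.sqrt_eq_rpow]
  congr 1
  have : (m:ℝ) ≠ 0 := by positivity
  field_simp

open MeasureTheory in
lemma lorentz_upper (p : ℝ) (q : ℝ≥0∞) (hp : 0 < p) (hq : 0 < q) :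
    ∃ A : ℝ, 0 < A ∧ ∀ (N : ℕ) (a : ℕ → ℝ), 0 < ∑ i ∈ Finset.Icc 1 N, a i ^ 2 →
      lorentzFNormE p q (ffun N a)
        ≤ ENNReal.ofReal (A * Real.sqrt (∑ i ∈ Finset.Icc 1 N, a i ^ 2)) := by
  set m : ℕ := ⌈p⌉₊ + 1 with hm
  have hm1 : 1 ≤ m := by omega
  have hmp : p < 2*(m:ℝ) := by
    have h1 : p ≤ (⌈p⌉₊ : ℝ) := Nat.le_ceil p
    have : ((⌈p⌉₊:ℝ)) < m := by rw [hm]; push_cast; linarith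
    have hm0 : (1:ℝ) ≤ m := by exact_mod_cast hm1
    linarith
  have hkc := kc_pos m
  set K₀ : ℝ := (kc m)^(1/(2*m):ℝ) with hK₀
  have hK₀pos : 0 < K₀ := Real.rpow_pos_of_pos hkc _
  have hexp : 0 < 1/p - 1/(2*(m:ℝ)) := by
    rw [sub_pos, div_lt_div_iff₀ (by positivity) hp]
    linarith
  -- pointwise frearr bound in product form
  have hfre : ∀ (N : ℕ) (a : ℕ → ℝ), 0 < ∑ i ∈ Finset.Icc 1 N, a i ^ 2 → ∀ t : ℝ, 0 < t →
      frearr (ffun N a) t ≤ K₀ * Real.sqrt (∑ i ∈ Finset.Icc 1 N, a i ^ 2) / t^(1/(2*m):ℝ) := by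
    intro N a hS t ht
    have h1 := frearr_upper N a m hm1 t ht hS
    set S' := ∑ i ∈ Finset.Icc 1 N, a i ^ 2
    have heq : (kc m * S'^m / t)^(1/(2*m):ℝ) = K₀ * Real.sqrt S' / t^(1/(2*m):ℝ) := by
      rw [Real.div_rpow (by positivity) ht.le, Real.mul_rpow hkc.le (by positivity),
        sqrtpow_eq S' hS.le m hm1]
    rw [heq] at h1
    exact h1
  rcases eq_or_ne q ⊤ with rfl | hqt
  · refine ⟨K₀, hK₀pos, ?_⟩
    intro N a hS
    set S' := ∑ i ∈ Finset.Icc 1 N, a i ^ 2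
    unfold lorentzFNormE
    rw [if_pos rfl]
    unfold lorentzFNormInf
    apply iSup_le
    rintro ⟨t, ht0, ht1⟩
    apply ENNReal.ofReal_le_ofReal
    have h1 : frearr (ffun N a) t ≤ K₀ * Real.sqrt S' / t^(1/(2*m):ℝ) := hfre N a hS t ht0
    have h2 : t ^ (1/p) * frearr (ffun N a) t ≤ t ^ (1/p) * (K₀ * Real.sqrt S' / t^(1/(2*m):ℝ)) :=
      mul_le_mul_of_nonneg_left h1 (Real.rpow_nonneg ht0.le _)
    apply le_trans h2
    have h3 : t ^ (1/p) * (K₀ * Real.sqrt S' / t^(1/(2*m):ℝ))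
        = K₀ * Real.sqrt S' * t ^ (1/p - 1/(2*m):ℝ) := by
      rw [Real.rpow_sub ht0]
      ring
    rw [h3]
    have h4 : t ^ (1/p - 1/(2*m):ℝ) ≤ 1 :=
      Real.rpow_le_one ht0.le ht1.le hexp.le
    nlinarith [mul_pos hK₀pos (Real.sqrt_pos.mpr hS), Real.sqrt_pos.mpr hS]
  · -- q < ∞
    have hr : 0 < q.toReal := ENNReal.toReal_pos hq.ne' hqt
    set r := q.toReal with hrdef
    set β : ℝ := r/p - r/(2*m) with hβ
    have hβpos : 0 < β := by
      have : β = r * (1/p - 1/(2*(m:ℝ))) := by rw [hβ]; ring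
      rw [this]
      positivity
    refine ⟨K₀ * (1/β)^(1/r), by positivity, ?_⟩
    intro N a hS
    set S' := ∑ i ∈ Finset.Icc 1 N, a i ^ 2 with hS'def
    set X := K₀ * Real.sqrt S' with hX
    have hXpos : 0 < X := mul_pos hK₀pos (Real.sqrt_pos.mpr hS)
    unfold lorentzFNormE
    rw [if_neg hqt]
    unfold lorentzFNorm
    have key : ∫⁻ t in Set.Ioo (0:ℝ) 1, ENNReal.ofReal (t ^ (r / p - 1) * frearr (ffun N a) t ^ r)
        ≤ ENNReal.ofReal (X^r * (1/β)) := by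
      have step1 : ∫⁻ t in Set.Ioo (0:ℝ) 1,
          ENNReal.ofReal (t ^ (r / p - 1) * frearr (ffun N a) t ^ r)
          ≤ ∫⁻ t in Set.Ioo (0:ℝ) 1, ENNReal.ofReal (X^r * t ^ (β - 1)) := by
        apply lintegral_mono_ae
        filter_upwards [ae_restrict_mem measurableSet_Ioo] with t ht
        apply ENNReal.ofReal_le_ofReal
        obtain ⟨ht0, ht1⟩ := ht
        have h1 : frearr (ffun N a) t ^ r ≤ (X / t^(1/(2*m):ℝ))^r :=
          Real.rpow_le_rpow (frearr_nonneg _ _) (hfre N a hS t ht0) hr.le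
        have h2 : t ^ (r/p - 1) * frearr (ffun N a) t ^ r
            ≤ t ^ (r/p - 1) * (X / t^(1/(2*m):ℝ))^r :=
          mul_le_mul_of_nonneg_left h1 (Real.rpow_nonneg ht0.le _)
        apply le_trans h2
        have h3 : (X / t^(1/(2*m):ℝ))^r = X^r / t^((1/(2*m):ℝ)*r) := by
          rw [Real.div_rpow hXpos.le (Real.rpow_nonneg ht0.le _), ← Real.rpow_mul ht0.le]
        rw [h3]
        have h4 : t ^ (β - 1) = t ^ (r/p - 1) / t ^ ((1/(2*m):ℝ)*r) := by
          rw [← Real.rpow_sub ht0]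
          congr 1
          rw [hβ]; ring
        rw [h4]
        rw [div_eq_mul_inv, div_eq_mul_inv]
        ring_nf
        exact le_refl _
      apply le_trans step1
      have step2 : ∫⁻ t in Set.Ioo (0:ℝ) 1, ENNReal.ofReal (X^r * t ^ (β - 1))
          = ENNReal.ofReal (X^r) * ENNReal.ofReal (1/β) := by
        have hc : ∀ t : ℝ, ENNReal.ofReal (X^r * t ^ (β - 1))
            = ENNReal.ofReal (X^r) * ENNReal.ofReal (t ^ (β - 1)) := by
          intro t
          rw [ENNReal.ofReal_mul (by positivity)]
        simp_rw [hc]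
        rw [lintegral_const_mul' _ _ ENNReal.ofReal_ne_top, lint_rpow β 1 hβpos one_pos (le_refl 1)]
        congr 1
        rw [Real.one_rpow]
      rw [step2, ← ENNReal.ofReal_mul (by positivity)]
    calc (∫⁻ t in Set.Ioo (0:ℝ) 1,
          ENNReal.ofReal (t ^ (r / p - 1) * frearr (ffun N a) t ^ r)) ^ (1/r)
        ≤ (ENNReal.ofReal (X^r * (1/β))) ^ (1/r) := ENNReal.rpow_le_rpow key (by positivity)
    _ = ENNReal.ofReal ((X^r * (1/β))^(1/r)) :=
        ENNReal.ofReal_rpow_of_nonneg (by positivity) (by positivity)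
    _ = ENNReal.ofReal (K₀ * (1/β)^(1/r) * Real.sqrt S') := by
        congr 1
        rw [Real.mul_rpow (by positivity) (by positivity), ← Real.rpow_mul hXpos.le,
          mul_one_div_cancel hr.ne', Real.rpow_one, hX]
        ring

open MeasureTheory in
lemma lorentz_lower (p : ℝ) (q : ℝ≥0∞) (hp : 0 < p) (hq : 0 < q) :
    ∃ B : ℝ, 0 < B ∧ ∀ (N : ℕ) (a : ℕ → ℝ),
      ENNReal.ofReal (B * Real.sqrt (∑ i ∈ Finset.Icc 1 N, a i ^ 2))
        ≤ lorentzFNormE p q (ffun N a) := by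
  rcases eq_or_ne q ⊤ with rfl | hqt
  · refine ⟨(1/8:ℝ)^(1/p) * (1/2), by positivity, ?_⟩
    intro N a
    set S' := ∑ i ∈ Finset.Icc 1 N, a i ^ 2 with hS'def
    unfold lorentzFNormE
    rw [if_pos rfl]
    unfold lorentzFNormInf
    have hmem : (1/8 : ℝ) ∈ Set.Ioo (0:ℝ) 1 := by norm_num
    apply le_trans _ (le_iSup _ (⟨1/8, hmem⟩ : Set.Ioo (0:ℝ) 1))
    apply ENNReal.ofReal_le_ofReal
    have h1 : Real.sqrt S' / 2 ≤ frearr (ffun N a) (1/8) :=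
      frearr_lower N a (1/8) (by norm_num) (by norm_num)
    have h2 : (0:ℝ) ≤ (1/8:ℝ)^(1/p) := by positivity
    calc (1/8:ℝ)^(1/p) * (1/2) * Real.sqrt S'
        = (1/8:ℝ)^(1/p) * (Real.sqrt S' / 2) := by ring
    _ ≤ (1/8:ℝ)^(1/p) * frearr (ffun N a) (1/8) := mul_le_mul_of_nonneg_left h1 h2
  · have hr : 0 < q.toReal := ENNReal.toReal_pos hq.ne' hqt
    set r := q.toReal with hrdef
    have hα : 0 < r/p := by positivity
    set D : ℝ := (1/8:ℝ)^(r/p) / (r/p) with hD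
    have hDpos : 0 < D := by positivity
    refine ⟨(1/2) * D^(1/r), by positivity, ?_⟩
    intro N a
    set S' := ∑ i ∈ Finset.Icc 1 N, a i ^ 2 with hS'def
    have hS0 : 0 ≤ S' := Finset.sum_nonneg (fun i _ => sq_nonneg _)
    unfold lorentzFNormE
    rw [if_neg hqt]
    unfold lorentzFNorm
    set Y := Real.sqrt S' / 2 with hY
    have hY0 : 0 ≤ Y := by positivity
    have key : ENNReal.ofReal (Y^r * D)
        ≤ ∫⁻ t in Set.Ioo (0:ℝ) 1, ENNReal.ofReal (t ^ (r / p - 1) * frearr (ffun N a) t ^ r) := by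
      have step0 : ∫⁻ t in Set.Ioo (0:ℝ) (1/8),
          ENNReal.ofReal (t ^ (r / p - 1) * frearr (ffun N a) t ^ r)
          ≤ ∫⁻ t in Set.Ioo (0:ℝ) 1,
          ENNReal.ofReal (t ^ (r / p - 1) * frearr (ffun N a) t ^ r) :=
        lintegral_mono_set (Set.Ioo_subset_Ioo le_rfl (by norm_num))
      refine le_trans ?_ step0
      have step1 : ∫⁻ t in Set.Ioo (0:ℝ) (1/8), ENNReal.ofReal (Y^r * t ^ (r/p - 1))
          ≤ ∫⁻ t in Set.Ioo (0:ℝ) (1/8),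
            ENNReal.ofReal (t ^ (r / p - 1) * frearr (ffun N a) t ^ r) := by
        apply lintegral_mono_ae
        filter_upwards [ae_restrict_mem measurableSet_Ioo] with t ht
        apply ENNReal.ofReal_le_ofReal
        obtain ⟨ht0, ht1⟩ := ht
        have h1 : Y ≤ frearr (ffun N a) t :=
          frearr_lower N a t ht0 (by linarith [ht1])
        have h2 : Y^r ≤ frearr (ffun N a) t ^ r := Real.rpow_le_rpow hY0 h1 hr.le
        have h3 : (0:ℝ) ≤ t ^ (r/p - 1) := Real.rpow_nonneg ht0.le _
        calc Y^r * t ^ (r/p-1) = t ^ (r/p-1) * Y^r := by ring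
        _ ≤ t ^ (r/p-1) * frearr (ffun N a) t ^ r := mul_le_mul_of_nonneg_left h2 h3
      refine le_trans ?_ step1
      have step2 : ∫⁻ t in Set.Ioo (0:ℝ) (1/8), ENNReal.ofReal (Y^r * t ^ (r/p - 1))
          = ENNReal.ofReal (Y^r) * ENNReal.ofReal D := by
        have hc : ∀ t : ℝ, ENNReal.ofReal (Y^r * t ^ (r/p - 1))
            = ENNReal.ofReal (Y^r) * ENNReal.ofReal (t ^ (r/p - 1)) := by
          intro t
          rw [ENNReal.ofReal_mul (by positivity)]
        simp_rw [hc]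
        rw [MeasureTheory.lintegral_const_mul' _ _ ENNReal.ofReal_ne_top,
          lint_rpow (r/p) (1/8) hα (by norm_num) (by norm_num)]
      rw [step2, ← ENNReal.ofReal_mul (by positivity)]
    have final : ENNReal.ofReal (1/2 * D^(1/r) * Real.sqrt S')
        = (ENNReal.ofReal (Y^r * D)) ^ (1/r : ℝ) := by
      rw [ENNReal.ofReal_rpow_of_nonneg (by positivity) (by positivity)]
      congr 1
      rw [Real.mul_rpow (by positivity) (by positivity), ← Real.rpow_mul hY0,
        mul_one_div_cancel hr.ne', Real.rpow_one, hY]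
      ring
    rw [final]
    exact ENNReal.rpow_le_rpow key (by positivity)


/-- Khintchine's inequality for Lorentz spaces `L^{p,q}(0,1)`,
`0 < p < ∞`, `0 < q ≤ ∞`. -/
theorem khintchine_lorentz (p : ℝ) (q : ℝ≥0∞) (hp : 0 < p) (hq : 0 < q) :
    ∃ C : ℝ, 0 < C ∧ ∀ (N : ℕ) (a : ℕ → ℝ),
      ENNReal.ofReal C⁻¹ *
          lorentzFNormE p q (fun t => ∑ i ∈ Finset.Icc 1 N, a i * radem i t) ≤
        ENNReal.ofReal (Real.sqrt (∑ i ∈ Finset.Icc 1 N, a i ^ 2)) ∧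
      ENNReal.ofReal (Real.sqrt (∑ i ∈ Finset.Icc 1 N, a i ^ 2)) ≤
        ENNReal.ofReal C *
          lorentzFNormE p q (fun t => ∑ i ∈ Finset.Icc 1 N, a i * radem i t) := by

  obtain ⟨A, hA, hupper⟩ := lorentz_upper p q hp hq
  obtain ⟨B, hB, hlower⟩ := lorentz_lower p q hp hq
  refine ⟨max A B⁻¹, lt_of_lt_of_le hA (le_max_left _ _), ?_⟩
  intro N a
  set C := max A B⁻¹ with hC
  have hCpos : 0 < C := lt_of_lt_of_le hA (le_max_left _ _)
  set S' := ∑ i ∈ Finset.Icc 1 N, a i ^ 2 with hS'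
  have hS0 : 0 ≤ S' := Finset.sum_nonneg fun i _ => sq_nonneg _
  have hffe : (fun t => ∑ i ∈ Finset.Icc 1 N, a i * radem i t) = ffun N a := rfl
  rw [hffe]
  rcases eq_or_lt_of_le hS0 with h0 | hSpos
  · have hz := lorentzFNormE_zero p q hq N a h0.symm
    rw [hz]
    constructor
    · rw [mul_zero]
      exact zero_le
    · rw [mul_zero, ← h0, Real.sqrt_zero, ENNReal.ofReal_zero]
  · constructor
    · have h1 := hupper N a hSpos
      calc ENNReal.ofReal C⁻¹ * lorentzFNormE p q (ffun N a)
          ≤ ENNReal.ofReal C⁻¹ * ENNReal.ofReal (A * Real.sqrt S') := mul_le_mul_right h1 _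
      _ = ENNReal.ofReal (C⁻¹ * (A * Real.sqrt S')) := (ENNReal.ofReal_mul (by positivity)).symm
      _ ≤ ENNReal.ofReal (Real.sqrt S') := by
          apply ENNReal.ofReal_le_ofReal
          have hAC : A ≤ C := le_max_left _ _
          have hs : 0 ≤ Real.sqrt S' := Real.sqrt_nonneg _
          have hCA : C⁻¹ * A ≤ 1 := by
            rw [inv_mul_le_iff₀ hCpos]
            linarith
          nlinarith [mul_le_mul_of_nonneg_right hCA hs]
    · have h2 := hlower N a
      calc ENNReal.ofReal (Real.sqrt S')
          ≤ ENNReal.ofReal (C * (B * Real.sqrt S')) := by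
            apply ENNReal.ofReal_le_ofReal
            have hBC : B⁻¹ ≤ C := le_max_right _ _
            have h4 := mul_le_mul_of_nonneg_right hBC hB.le
            rw [inv_mul_cancel₀ hB.ne'] at h4
            nlinarith [Real.sqrt_nonneg S']
      _ = ENNReal.ofReal C * ENNReal.ofReal (B * Real.sqrt S') := ENNReal.ofReal_mul hCpos.le
      _ ≤ ENNReal.ofReal C * lorentzFNormE p q (ffun N a) := mul_le_mul_right h2 _
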